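/- For every W ∈ 𝒱_n one has W ≠ {0}, and there exists a unique set T_W of pairwise commuting transpositions of S_{n+1} such that W = ⋂_{t∈T_W} V_t. Moreover T_W = {t : t is a transposition of S_{n+1} and W ⊆ V_t}. -/

import Mathlib

/-! Basic setup: type A_n geometric representation, Weyl lines, combinatorics. -/

namespace TLpaper

/-- A permutation is a transposition. -/
def IsTransposition {α : Type} [DecidableEq α] (σ : Equiv.Perm α) : Prop :=
  ∃ a b, a ≠ b ∧ σ = Equiv.swap a b

variable (k : Type) [Field k] [CharZero k] (n : ℕ)

/-- The reflecting hyperplane of a permutation `t` inside `V = {x | ∑ x i = 0}`: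
the set of points of `V` fixed by permuting the coordinates by `t`.  For a
transposition `t = (a b)` this is `{x ∈ V | x a = x b}`. -/
def Hyp (t : Equiv.Perm (Fin (n + 1))) : Set (Fin (n + 1) → k) :=
  {x | (∑ i, x i) = 0 ∧ ∀ i, x (t i) = x i}

/-- A Weyl line: a one-dimensional linear subspace of `V` which is an
intersection of a (possibly empty) family of reflecting hyperplanes. -/
def IsWeylLine (L : Set (Fin (n + 1) → k)) : Prop :=
  (∃ v : Fin (n + 1) → k, v ≠ 0 ∧ L = Set.range fun c : k => c • v) ∧
  ∃ T : Set (Equiv.Perm (Fin (n + 1))),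
    (∀ t ∈ T, IsTransposition t) ∧
    L = {x | (∑ i, x i) = 0} ∩ ⋂ t ∈ T, Hyp k n t

/-- `Z`: the union of all Weyl lines. -/
def ZZ : Set (Fin (n + 1) → k) := ⋃ L ∈ {L | IsWeylLine k n L}, L

/-- `V_t`: the union of all Weyl lines transverse to `t` (i.e. not contained in `H_t`). -/
def Vt (t : Equiv.Perm (Fin (n + 1))) : Set (Fin (n + 1) → k) :=
  ⋃ L ∈ {L | IsWeylLine k n L ∧ ¬L ⊆ Hyp k n t}, L

open Fin.NatCast in
/-- The simple transposition `s_i = (i, i+1)` (0-indexed: it swaps coordinates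
`i` and `i+1` of `Fin (n+1)`, for `i < n`). -/
def simple (i : ℕ) : Equiv.Perm (Fin (n + 1)) :=
  Equiv.swap (i : Fin (n + 1)) ((i + 1 : ℕ) : Fin (n + 1))

/-- `V_i := V_{s_i}`. -/
def Vi (i : ℕ) : Set (Fin (n + 1) → k) := Vt k n (simple n i)

/-- The action of a permutation on a subset of `k^{n+1}` (permuting coordinates). -/
def permSet (σ : Equiv.Perm (Fin (n + 1))) (W : Set (Fin (n + 1) → k)) :
    Set (Fin (n + 1) → k) :=
  (fun x => x ∘ σ) '' W

/-- `i · W := V_i ∩ (W ∪ s_i (W))`. -/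
def dotAct (i : ℕ) (W : Set (Fin (n + 1) → k)) : Set (Fin (n + 1) → k) :=
  Vi k n i ∩ (W ∪ permSet k n (simple n i) W)

/-- The set `W_{i_1 ⋯ i_m}` associated with a sequence of indices. -/
def seqSet : List ℕ → Set (Fin (n + 1) → k)
  | [] => ZZ k n
  | [i] => Vi k n i
  | i :: j :: l => dotAct k n i (seqSet (j :: l))

/-- Membership in the family `𝒱_n`. -/
def memVn (W : Set (Fin (n + 1) → k)) : Prop :=
  ∃ l : List ℕ, l ≠ [] ∧ (∀ i ∈ l, i < n) ∧ W = seqSet k n l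

/-- A set of pairwise commuting transpositions. -/
def CommTranspositions (Q : Set (Equiv.Perm (Fin (n + 1)))) : Prop :=
  (∀ t ∈ Q, IsTransposition t) ∧ ∀ t ∈ Q, ∀ t' ∈ Q, t * t' = t' * t


section AuxLemmas
set_option linter.unusedSectionVars false

/-! ### Auxiliary machinery -/

variable {k : Type} [Field k] [CharZero k] {n : ℕ}

/-- A vector takes at most two distinct values. -/
def TwoVal (x : Fin (n + 1) → k) : Prop :=
  ∀ i j l, x i = x j ∨ x i = x l ∨ x j = x l

lemma swap_fix_iff (a b : Fin (n + 1)) (x : Fin (n + 1) → k) :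
    (∀ m, x (Equiv.swap a b m) = x m) ↔ x a = x b := by
  constructor
  · intro h
    have := h a
    rw [Equiv.swap_apply_left] at this
    exact this.symm
  · intro h m
    rcases eq_or_ne m a with rfl | hma
    · rw [Equiv.swap_apply_left]; exact h.symm
    rcases eq_or_ne m b with rfl | hmb
    · rw [Equiv.swap_apply_right]; exact h
    · rw [Equiv.swap_apply_of_ne_of_ne hma hmb]

lemma twoVal_smul {x : Fin (n + 1) → k} (h : TwoVal x) (c : k) : TwoVal (c • x) := by
  intro i j l
  rcases h i j l with h' | h' | h' <;>
    simp only [Pi.smul_apply, smul_eq_mul, h'] <;> tauto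

/-- Every point of a Weyl line has coordinate sum zero and is two-valued. -/
lemma weylLine_props {L : Set (Fin (n + 1) → k)} (hL : IsWeylLine k n L) :
    ∀ x ∈ L, (∑ m, x m) = 0 ∧ TwoVal x := by
  obtain ⟨⟨v, hv0, hvL⟩, T, hT, hLT⟩ := hL
  have hvmem : v ∈ L := by rw [hvL]; exact ⟨1, one_smul _ _⟩
  have hsum0 : ∀ y ∈ L, (∑ m, y m) = 0 := by
    intro y hy
    rw [hLT] at hy
    exact hy.1
  have hfix : ∀ y ∈ L, ∀ t ∈ T, ∀ m, y (t m) = y m := by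
    intro y hy t ht m
    rw [hLT] at hy
    have := Set.mem_iInter₂.mp hy.2 t ht
    exact this.2 m
  have hn1 : ((n : k) + 1) ≠ 0 := by
    have := Nat.cast_add_one_ne_zero (R := k) n
    simpa using this
  set μ : k := (∑ m, v m ^ 2) / ((n : k) + 1) with hμ
  have hwsum : (∑ m, (v m ^ 2 - μ)) = 0 := by
    rw [Finset.sum_sub_distrib, Finset.sum_const, Finset.card_univ, Fintype.card_fin,
      nsmul_eq_mul, hμ]
    push_cast
    field_simp
    ring
  have hw : (fun m => v m ^ 2 - μ) ∈ L := by
    rw [hLT]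
    refine ⟨hwsum, Set.mem_iInter₂.mpr fun t ht => ?_⟩
    simp only [Hyp, Set.mem_setOf_eq]
    exact ⟨hwsum, fun m => by rw [hfix v hvmem t ht m]⟩
  have hquad : ∃ c : k, ∀ m, v m ^ 2 - μ = c * v m := by
    rw [hvL] at hw
    obtain ⟨c, hc⟩ := hw
    exact ⟨c, fun m => by have := congrFun hc.symm m; simpa [mul_comm] using this⟩
  have hvtv : TwoVal v := by
    obtain ⟨c, hc⟩ := hquad
    intro i j l
    by_contra hcon
    push_neg at hcon
    obtain ⟨hij, hil, hjl⟩ := hcon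
    have key : ∀ a b : Fin (n + 1), v a ≠ v b → v a + v b = c := by
      intro a b hab
      have h1 := hc a
      have h2 := hc b
      have h3 : (v a - v b) * (v a + v b - c) = 0 := by linear_combination h1 - h2
      rcases mul_eq_zero.mp h3 with h4 | h4
      · exact absurd (sub_eq_zero.mp h4) hab
      · linear_combination h4
    have e1 := key i j hij
    have e2 := key i l hil
    exact hjl (by linear_combination e1 - e2)
  intro x hx
  refine ⟨hsum0 x hx, ?_⟩
  rw [hvL] at hx
  obtain ⟨c, rfl⟩ := hx
  exact twoVal_smul hvtv c

lemma sum_dichot (p : Fin (n + 1) → Prop) [DecidablePred p] (x : Fin (n + 1) → k) (u w : k)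
    (h1 : ∀ j, p j → x j = u) (h2 : ∀ j, ¬p j → x j = w) :
    (∑ j, x j) = ((Finset.univ.filter p).card : k) * u
      + ((Finset.univ.filter fun j => ¬p j).card : k) * w := by
  rw [← Finset.sum_filter_add_sum_filter_not Finset.univ p]
  congr 1
  · rw [Finset.sum_congr rfl fun j hj => h1 j (Finset.mem_filter.mp hj).2,
      Finset.sum_const, nsmul_eq_mul]
  · rw [Finset.sum_congr rfl fun j hj => h2 j (Finset.mem_filter.mp hj).2,
      Finset.sum_const, nsmul_eq_mul]

/-- The line through a nonzero two-valued sum-zero vector is a Weyl line. -/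
lemma line_of_point {x : Fin (n + 1) → k} (hx : x ≠ 0) (hs : (∑ m, x m) = 0)
    (htv : TwoVal x) : IsWeylLine k n (Set.range fun c : k => c • x) := by
  classical
  refine ⟨⟨x, hx, rfl⟩, {t | ∃ a b, a ≠ b ∧ x a = x b ∧ t = Equiv.swap a b}, ?_, ?_⟩
  · rintro t ⟨a, b, hab, -, rfl⟩
    exact ⟨a, b, hab, rfl⟩
  · ext y
    constructor
    · rintro ⟨c, rfl⟩
      refine ⟨?_, Set.mem_iInter₂.mpr ?_⟩
      · show (∑ m, c * x m) = 0
        rw [← Finset.mul_sum, hs, mul_zero]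
      · rintro t ⟨a, b, hab, hxab, rfl⟩
        refine ⟨by rw [show (∑ m, (c • x) m) = ∑ m, c * x m from rfl, ← Finset.mul_sum, hs, mul_zero], ?_⟩
        rw [swap_fix_iff]
        show c * x a = c * x b
        rw [hxab]
    · rintro ⟨hy1, hy2⟩
      have hyfix : ∀ a b, x a = x b → y a = y b := by
        intro a b hab
        rcases eq_or_ne a b with rfl | hne
        · rfl
        have ht := Set.mem_iInter₂.mp hy2 (Equiv.swap a b) ⟨a, b, hne, hab, rfl⟩
        exact ((swap_fix_iff a b y).mp ht.2).symm ▸ rfl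
      obtain ⟨a1, ha1⟩ : ∃ a1, x a1 ≠ 0 := by
        by_contra h
        push_neg at h
        exact hx (funext fun m => h m)
      have hy1' : (∑ m, y m) = 0 := hy1
      refine ⟨y a1 / x a1, funext fun m => ?_⟩
      show y a1 / x a1 * x m = y m
      rcases eq_or_ne (x m) (x a1) with hm | hm
      · rw [hm, div_mul_cancel₀ _ ha1]
        exact (hyfix m a1 hm).symm
      · -- two-level sum argument
        have hdich : ∀ j, x j = x a1 ∨ x j = x m := by
          intro j
          rcases htv a1 m j with h | h | h
          · exact absurd h.symm hm
          · exact Or.inl h.symm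
          · exact Or.inr h.symm
        set p : Fin (n + 1) → Prop := fun j => x j = x a1 with hp
        have hx2 : ∀ j, ¬p j → x j = x m := fun j hj => (hdich j).resolve_left hj
        have hsx := sum_dichot p x (x a1) (x m) (fun j hj => hj) hx2
        have hsy := sum_dichot p y (y a1) (y m) (fun j hj => hyfix j a1 hj)
          (fun j hj => hyfix j m (hx2 j hj))
        rw [hs] at hsx
        rw [hy1'] at hsy
        set N1 : k := ((Finset.univ.filter p).card : k)
        set N2 : k := ((Finset.univ.filter fun j => ¬p j).card : k)
        have hN2 : N2 ≠ 0 := by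
          have hmm : m ∈ Finset.univ.filter fun j => ¬p j := by
            simp only [Finset.mem_filter, Finset.mem_univ, true_and]
            exact hm
          have h0 : 0 < (Finset.univ.filter fun j => ¬p j).card := Finset.card_pos.mpr ⟨m, hmm⟩
          show ((Finset.univ.filter fun j => ¬p j).card : k) ≠ 0
          exact_mod_cast h0.ne'
        -- N1 * x a1 + N2 * x m = 0 and N1 * y a1 + N2 * y m = 0
        have hxm : x m = -(N1 * x a1) / N2 := by
          field_simp
          linear_combination -hsx
        have hym : y m = -(N1 * y a1) / N2 := by
          field_simp
          linear_combination -hsy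
        rw [hxm, hym]
        field_simp

lemma mem_Vt_iff {a b : Fin (n + 1)} (hab : a ≠ b) (x : Fin (n + 1) → k) :
    x ∈ Vt k n (Equiv.swap a b) ↔
      (x = 0 ∨ ((∑ m, x m) = 0 ∧ TwoVal x ∧ x a ≠ x b)) := by
  classical
  constructor
  · intro hx
    simp only [Vt, Set.mem_iUnion, Set.mem_setOf_eq] at hx
    obtain ⟨L, ⟨⟨hL, hLH⟩, hxL⟩⟩ := hx
    rcases eq_or_ne x 0 with rfl | hx0
    · exact Or.inl rfl
    refine Or.inr ⟨(weylLine_props hL x hxL).1, (weylLine_props hL x hxL).2, ?_⟩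
    intro hxab
    apply hLH
    obtain ⟨v, hv0, hvL⟩ := hL.1
    have hva : v a = v b := by
      rw [hvL] at hxL
      obtain ⟨c, rfl⟩ := hxL
      have hc0 : c ≠ 0 := by rintro rfl; exact hx0 (zero_smul _ _)
      have : c * v a = c * v b := hxab
      exact mul_left_cancel₀ hc0 this
    intro y hyL
    refine ⟨(weylLine_props hL y hyL).1, ?_⟩
    rw [swap_fix_iff]
    rw [hvL] at hyL
    obtain ⟨c, rfl⟩ := hyL
    show c * v a = c * v b
    rw [hva]
  · rintro (rfl | ⟨hs, htv, hxab⟩)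
    · -- 0 lies on a line not contained in Hyp (swap a b)
      set x0 : Fin (n + 1) → k := fun m => if m = a then (n : k) else -1 with hx0def
      have hx0a : x0 a = (n : k) := by simp [hx0def]
      have hx0b : x0 b = -1 := by simp [hx0def, hab.symm]
      have hne : x0 a ≠ x0 b := by
        rw [hx0a, hx0b]
        intro h
        have h2 : (n : k) + 1 = 0 := by linear_combination h
        have hn1 : ((n : k) + 1) ≠ 0 := by
          have := Nat.cast_add_one_ne_zero (R := k) n
          simpa using this
        exact hn1 h2
      have hx00 : x0 ≠ 0 := by
        intro h
        have := congrFun h b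
        rw [hx0b] at this
        simpa using this
      have hx0s : (∑ m, x0 m) = 0 := by
        have := sum_dichot (fun m => m = a) x0 (n : k) (-1)
          (fun j hj => by simp [hx0def, hj]) (fun j hj => by simp [hx0def, hj])
        rw [this]
        have h1 : (Finset.univ.filter fun m : Fin (n + 1) => m = a).card = 1 := by
          simp [Finset.filter_eq']
        have h2 : (Finset.univ.filter fun m : Fin (n + 1) => ¬m = a).card = n := by
          have := Finset.card_filter_add_card_filter_not
            (s := (Finset.univ : Finset (Fin (n + 1)))) (p := fun m => m = a)
          simp only [Finset.card_univ, Fintype.card_fin, h1] at this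
          omega
        rw [h1, h2]
        push_cast
        ring
      have hx0tv : TwoVal x0 := by
        intro i j l
        by_cases hi : i = a <;> by_cases hj : j = a <;> by_cases hl : l = a <;>
          simp [hx0def, hi, hj, hl]
      have hline := line_of_point hx00 hx0s hx0tv
      simp only [Vt, Set.mem_iUnion, Set.mem_setOf_eq]
      refine ⟨Set.range fun c : k => c • x0, ⟨⟨hline, ?_⟩, ⟨0, zero_smul _ _⟩⟩⟩
      intro hsub
      have hx0mem : x0 ∈ Set.range fun c : k => c • x0 := ⟨1, one_smul _ _⟩
      have := (hsub hx0mem).2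
      rw [swap_fix_iff] at this
      exact hne this
    · have hx0 : x ≠ 0 := by
        intro h
        rw [h] at hxab
        exact hxab rfl
      simp only [Vt, Set.mem_iUnion, Set.mem_setOf_eq]
      refine ⟨Set.range fun c : k => c • x, ⟨⟨line_of_point hx0 hs htv, ?_⟩, ⟨1, one_smul _ _⟩⟩⟩
      intro hsub
      have hxmem : x ∈ Set.range fun c : k => c • x := ⟨1, one_smul _ _⟩
      have := (hsub hxmem).2
      rw [swap_fix_iff] at this
      exact hxab this

/-! ### Matchings -/

/-- `M` is a partial matching (symmetric, irreflexive, functional relation). -/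
def IsMatch {n : ℕ} (M : Fin (n + 1) → Fin (n + 1) → Prop) : Prop :=
  (∀ a b, M a b → M b a) ∧ (∀ a, ¬M a a) ∧ (∀ a b c, M a b → M a c → b = c)

/-- `x` separates every matched pair. -/
def MSplit {n : ℕ} (M : Fin (n + 1) → Fin (n + 1) → Prop) (x : Fin (n + 1) → k) : Prop :=
  ∀ a b, M a b → x a ≠ x b

/-- The set of points associated with a matching. -/
def WST {n : ℕ} (M : Fin (n + 1) → Fin (n + 1) → Prop) : Set (Fin (n + 1) → k) :=
  {x | x = 0 ∨ ((∑ m, x m) = 0 ∧ TwoVal x ∧ MSplit M x)}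

/-- Updating a matching when acting by `i·(-)`, `I,J` the two swapped indices. -/
def upd {n : ℕ} (I J : Fin (n + 1)) (M : Fin (n + 1) → Fin (n + 1) → Prop) :
    Fin (n + 1) → Fin (n + 1) → Prop := fun a b =>
  (a = I ∧ b = J) ∨ (a = J ∧ b = I) ∨
    (M a b ∧ a ≠ I ∧ a ≠ J ∧ b ≠ I ∧ b ≠ J) ∨
    (∃ u v, M I u ∧ M J v ∧ ((a = u ∧ b = v) ∨ (a = v ∧ b = u)))

lemma isMatch_upd {n : ℕ} {M : Fin (n + 1) → Fin (n + 1) → Prop} (hM : IsMatch M)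
    {I J : Fin (n + 1)} (hIJ : I ≠ J) : IsMatch (upd I J M) := by
  obtain ⟨hsym, hirr, huniq⟩ := hM
  have hdis : ∀ w, M I w → M J w → False := fun w h1 h2 =>
    hIJ (huniq w I J (hsym _ _ h1) (hsym _ _ h2))
  refine ⟨?_, ?_, ?_⟩
  · intro a b h
    rcases h with ⟨h1, h2⟩ | ⟨h1, h2⟩ | ⟨h, h1, h2, h3, h4⟩ | ⟨u, v, hu, hv, (⟨h1, h2⟩ | ⟨h1, h2⟩)⟩
    · exact Or.inr (Or.inl ⟨h2, h1⟩)
    · exact Or.inl ⟨h2, h1⟩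
    · exact Or.inr (Or.inr (Or.inl ⟨hsym _ _ h, h3, h4, h1, h2⟩))
    · exact Or.inr (Or.inr (Or.inr ⟨u, v, hu, hv, Or.inr ⟨h2, h1⟩⟩))
    · exact Or.inr (Or.inr (Or.inr ⟨u, v, hu, hv, Or.inl ⟨h2, h1⟩⟩))
  · intro a h
    rcases h with ⟨h1, h2⟩ | ⟨h1, h2⟩ | ⟨h, _, _, _, _⟩ | ⟨u, v, hu, hv, (⟨h1, h2⟩ | ⟨h1, h2⟩)⟩
    · exact hIJ (h1.symm.trans h2)
    · exact hIJ (h2.symm.trans h1)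
    · exact hirr a h
    · rw [← h1] at hu; rw [← h2] at hv; exact hdis a hu hv
    · rw [← h2] at hu; rw [← h1] at hv; exact hdis a hu hv
  · intro a b c h1 h2
    rcases h1 with ⟨ha, hb⟩ | ⟨ha, hb⟩ | ⟨hab, ha1, ha2, hb1, hb2⟩ |
      ⟨u, v, hu, hv, (⟨ha, hb⟩ | ⟨ha, hb⟩)⟩ <;>
    rcases h2 with ⟨ha', hc⟩ | ⟨ha', hc⟩ | ⟨hac, ha1', ha2', hc1, hc2⟩ |
      ⟨u', v', hu', hv', (⟨ha', hc⟩ | ⟨ha', hc⟩)⟩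
    · rw [hb, hc]
    · exact absurd (ha.symm.trans ha') hIJ
    · exact absurd ha ha1'
    · rw [ha'.symm.trans ha] at hu'
      exact absurd hu' (hirr I)
    · rw [ha'.symm.trans ha] at hv'
      have hMIJ : M I J := hsym _ _ hv'
      rw [hb, hc, huniq I u' J hu' hMIJ]
    · exact absurd (ha'.symm.trans ha) hIJ
    · rw [hb, hc]
    · exact absurd ha ha2'
    · rw [ha'.symm.trans ha] at hu'
      have hMJI : M J I := hsym _ _ hu'
      rw [hb, hc, huniq J v' I hv' hMJI]
    · rw [ha'.symm.trans ha] at hv'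
      exact absurd hv' (hirr J)
    · exact absurd ha' ha1
    · exact absurd ha' ha2
    · exact huniq a b c hab hac
    · rw [← ha'] at hu'
      exact absurd (huniq a b I hab (hsym _ _ hu')) hb1
    · rw [← ha'] at hv'
      exact absurd (huniq a b J hab (hsym _ _ hv')) hb2
    · rw [ha.symm.trans ha'] at hu
      exact absurd hu (hirr I)
    · rw [ha.symm.trans ha'] at hu
      have hMJI : M J I := hsym _ _ hu
      rw [hb, hc, huniq J v I hv hMJI]
    · rw [← ha] at hu
      exact absurd (huniq a c I hac (hsym _ _ hu)) hc1
    · rw [hb, hc, huniq J v v' hv hv']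
    · rw [ha.symm.trans ha'] at hu
      exact absurd hv' (fun h => hdis v' hu h)
    · rw [ha.symm.trans ha'] at hv
      have hMIJ : M I J := hsym _ _ hv
      rw [hb, hc, huniq I u J hu hMIJ]
    · rw [ha.symm.trans ha'] at hv
      exact absurd hv (hirr J)
    · rw [← ha] at hv
      exact absurd (huniq a c J hac (hsym _ _ hv)) hc2
    · rw [ha.symm.trans ha'] at hv
      exact absurd hv (fun h => hdis u' hu' h)
    · rw [hb, hc, huniq I u u' hu hu']

/-- The key combinatorial computation for `i·W`. -/
lemma core_iff {I J : Fin (n + 1)} (hIJ : I ≠ J) {M : Fin (n + 1) → Fin (n + 1) → Prop}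
    (hM : IsMatch M) {x : Fin (n + 1) → k} (htv : TwoVal x) :
    (x I ≠ x J ∧ (MSplit M x ∨
        MSplit (fun c d => M (Equiv.swap I J c) (Equiv.swap I J d)) x)) ↔
      MSplit (upd I J M) x := by
  obtain ⟨hsym, hirr, huniq⟩ := hM
  set s := Equiv.swap I J with hsdef
  have sI : s I = J := Equiv.swap_apply_left I J
  have sJ : s J = I := Equiv.swap_apply_right I J
  have sfix : ∀ m, m ≠ I → m ≠ J → s m = m := fun m h1 h2 =>
    Equiv.swap_apply_of_ne_of_ne h1 h2
  have ss : ∀ m, s (s m) = m := fun m => Equiv.swap_apply_self I J m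
  have hMS2 : MSplit (fun c d => M (s c) (s d)) x ↔ (∀ a b, M a b → x (s a) ≠ x (s b)) := by
    constructor
    · intro h a b hab
      apply h (s a) (s b)
      rw [ss, ss]
      exact hab
    · intro h a b hab
      have := h (s a) (s b) hab
      rwa [ss, ss] at this
  constructor
  · rintro ⟨hxIJ, hsp⟩
    have hval : ∀ m, x m = x I ∨ x m = x J := by
      intro m
      rcases htv I J m with h | h | h
      · exact absurd h hxIJ
      · exact Or.inl h.symm
      · exact Or.inr h.symm
    intro a b hab
    rcases hab with ⟨ha, hb⟩ | ⟨ha, hb⟩ | ⟨hMab, ha1, ha2, hb1, hb2⟩ |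
        ⟨u, v, hu, hv, huv⟩
    · rw [ha, hb]; exact hxIJ
    · rw [ha, hb]; exact hxIJ.symm
    · rcases hsp with hs1 | hs1
      · exact hs1 a b hMab
      · refine hs1 a b ?_
        show M (s a) (s b)
        rw [sfix a ha1 ha2, sfix b hb1 hb2]
        exact hMab
    · have key : x u ≠ x v := by
        rcases eq_or_ne u J with huJ | huJ
        · -- M I J holds, so v = I
          have hMIJ : M I J := huJ ▸ hu
          have hvI : v = I := huniq J v I hv (hsym _ _ hMIJ)
          rw [huJ, hvI]
          exact hxIJ.symm
        · have huI : u ≠ I := fun h => hirr I (h ▸ hu)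
          have hvJ : v ≠ J := fun h => hirr J (h ▸ hv)
          have hvI : v ≠ I := fun h => huJ (huniq I u J hu (hsym _ _ (h ▸ hv)))
          rcases hsp with hs1 | hs1
          · have h1 := hs1 I u hu
            have h2 := hs1 J v hv
            have hxu : x u = x J := (hval u).resolve_left fun h => h1 h.symm
            have hxv : x v = x I := (hval v).resolve_right fun h => h2 h.symm
            rw [hxu, hxv]
            exact hxIJ.symm
          · rw [hMS2] at hs1
            have h1 := hs1 I u hu
            have h2 := hs1 J v hv
            rw [sI, sfix u huI huJ] at h1
            rw [sJ, sfix v hvI hvJ] at h2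
            have hxu : x u = x I := (hval u).resolve_right fun h => h1 h.symm
            have hxv : x v = x J := (hval v).resolve_left fun h => h2 h.symm
            rw [hxu, hxv]
            exact hxIJ
      rcases huv with ⟨ha, hb⟩ | ⟨ha, hb⟩
      · rw [ha, hb]; exact key
      · rw [ha, hb]; exact key.symm
  · intro hsp
    have hxIJ : x I ≠ x J := hsp I J (Or.inl ⟨rfl, rfl⟩)
    refine ⟨hxIJ, ?_⟩
    have hval : ∀ m, x m = x I ∨ x m = x J := by
      intro m
      rcases htv I J m with h | h | h
      · exact absurd h hxIJ
      · exact Or.inl h.symm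
      · exact Or.inr h.symm
    by_cases hMIJ : M I J
    · left
      intro a b hab
      rcases eq_or_ne a I with rfl | haI
      · rw [huniq a b J hab hMIJ]; exact hxIJ
      rcases eq_or_ne a J with rfl | haJ
      · rw [huniq a b I hab (hsym _ _ hMIJ)]; exact hxIJ.symm
      rcases eq_or_ne b I with rfl | hbI
      · exact absurd (huniq b a J (hsym _ _ hab) hMIJ) haJ
      rcases eq_or_ne b J with rfl | hbJ
      · exact absurd (huniq b a I (hsym _ _ hab) (hsym _ _ hMIJ)) haI
      · exact hsp a b (Or.inr (Or.inr (Or.inl ⟨hab, haI, haJ, hbI, hbJ⟩)))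
    · by_cases hleft : (∀ u, M I u → x u = x J) ∧ (∀ v, M J v → x v = x I)
      · left
        intro a b hab
        rcases eq_or_ne a I with rfl | haI
        · rw [hleft.1 b hab]; exact hxIJ
        rcases eq_or_ne a J with rfl | haJ
        · rw [hleft.2 b hab]; exact hxIJ.symm
        rcases eq_or_ne b I with rfl | hbI
        · rw [hleft.1 a (hsym _ _ hab)]; exact hxIJ.symm
        rcases eq_or_ne b J with rfl | hbJ
        · rw [hleft.2 a (hsym _ _ hab)]; exact hxIJ
        · exact hsp a b (Or.inr (Or.inr (Or.inl ⟨hab, haI, haJ, hbI, hbJ⟩)))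
      · right
        rw [hMS2]
        -- from the failure of `hleft`, all partners of I have value x I
        -- and all partners of J have value x J
        have hkey : (∀ u, M I u → x u = x I) ∧ (∀ v, M J v → x v = x J) := by
          rw [not_and_or] at hleft
          rcases hleft with h | h
          · push_neg at h
            obtain ⟨u0, hu0, hxu0⟩ := h
            have hxu0' : x u0 = x I := (hval u0).resolve_right hxu0
            constructor
            · intro u hu
              rw [huniq I u u0 hu hu0]
              exact hxu0'
            · intro v hv
              have hne := hsp u0 v (Or.inr (Or.inr (Or.inr ⟨u0, v, hu0, hv, Or.inl ⟨rfl, rfl⟩⟩)))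
              rw [hxu0'] at hne
              exact (hval v).resolve_left fun h' => hne h'.symm
          · push_neg at h
            obtain ⟨v0, hv0, hxv0⟩ := h
            have hxv0' : x v0 = x J := (hval v0).resolve_left hxv0
            constructor
            · intro u hu
              have hne := hsp u v0 (Or.inr (Or.inr (Or.inr ⟨u, v0, hu, hv0, Or.inl ⟨rfl, rfl⟩⟩)))
              rw [hxv0'] at hne
              exact (hval u).resolve_right hne
            · intro v hv
              rw [huniq J v v0 hv hv0]
              exact hxv0'
        intro a b hab
        rcases eq_or_ne a I with haI | haI
        · have hab' : M I b := haI ▸ hab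
          have hbI' : b ≠ I := fun h => hirr I (h ▸ hab')
          have hbJ' : b ≠ J := fun h => hMIJ (h ▸ hab')
          rw [haI, sI, sfix b hbI' hbJ', hkey.1 b hab']
          exact hxIJ.symm
        rcases eq_or_ne a J with haJ | haJ
        · have hab' : M J b := haJ ▸ hab
          have hbJ' : b ≠ J := fun h => hirr J (h ▸ hab')
          have hbI' : b ≠ I := fun h => hMIJ (hsym _ _ (h ▸ hab'))
          rw [haJ, sJ, sfix b hbI' hbJ', hkey.2 b hab']
          exact hxIJ
        rcases eq_or_ne b I with hbI | hbI
        · have hab' : M a I := hbI ▸ hab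
          rw [hbI, sI, sfix a haI haJ, hkey.1 a (hsym _ _ hab')]
          exact hxIJ
        rcases eq_or_ne b J with hbJ | hbJ
        · have hab' : M a J := hbJ ▸ hab
          rw [hbJ, sJ, sfix a haI haJ, hkey.2 a (hsym _ _ hab')]
          exact hxIJ.symm
        · rw [sfix a haI haJ, sfix b hbI hbJ]
          exact hsp a b (Or.inr (Or.inr (Or.inl ⟨hab, haI, haJ, hbI, hbJ⟩)))

lemma comp_swap_mem_WST_iff (I J : Fin (n + 1)) (M : Fin (n + 1) → Fin (n + 1) → Prop)
    (x : Fin (n + 1) → k) :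
    x ∘ (Equiv.swap I J) ∈
        WST (fun c d => M (Equiv.swap I J c) (Equiv.swap I J d)) ↔ x ∈ WST M := by
  set s := Equiv.swap I J with hsdef
  have ss : ∀ m, s (s m) = m := fun m => Equiv.swap_apply_self I J m
  simp only [WST, Set.mem_setOf_eq]
  have h0 : x ∘ s = 0 ↔ x = 0 := by
    constructor
    · intro h
      funext m
      have := congrFun h (s m)
      simpa [ss m] using this
    · intro h
      rw [h]
      rfl
  have hsum : (∑ m, (x ∘ s) m) = ∑ m, x m := Equiv.sum_comp s x
  have htv : TwoVal (x ∘ s) ↔ TwoVal x := by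
    constructor
    · intro h i j l
      have := h (s i) (s j) (s l)
      simpa [Function.comp, ss] using this
    · intro h i j l
      exact h (s i) (s j) (s l)
  have hsp : MSplit (fun c d => M (s c) (s d)) (x ∘ s) ↔ MSplit M x := by
    constructor
    · intro h a b hab
      have := h (s a) (s b) (by show M (s (s a)) (s (s b)); rw [ss, ss]; exact hab)
      simpa [Function.comp, ss] using this
    · intro h a b hab
      exact h (s a) (s b) hab
  rw [h0, hsum, htv, hsp]

lemma permSet_WST (I J : Fin (n + 1)) (M : Fin (n + 1) → Fin (n + 1) → Prop) :
    permSet k n (Equiv.swap I J) (WST M) =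
      WST (fun c d => M (Equiv.swap I J c) (Equiv.swap I J d)) := by
  set s := Equiv.swap I J with hsdef
  have ss : ∀ m, s (s m) = m := fun m => Equiv.swap_apply_self I J m
  ext y
  simp only [permSet, Set.mem_image]
  constructor
  · rintro ⟨x, hx, rfl⟩
    show x ∘ s ∈ _
    rw [comp_swap_mem_WST_iff]
    exact hx
  · intro hy
    refine ⟨y ∘ s, ?_, ?_⟩
    · rw [← comp_swap_mem_WST_iff I J M (y ∘ s)]
      have : (y ∘ s) ∘ s = y := by funext m; simp [Function.comp, ss]
      rwa [this]
    · funext m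
      simp only [Function.comp_apply]
      rw [ss]

open Fin.NatCast in
lemma cast_ne {i : ℕ} (hi : i < n) :
    ((i : ℕ) : Fin (n + 1)) ≠ (((i + 1 : ℕ)) : Fin (n + 1)) := by
  intro h
  have := congrArg Fin.val h
  rw [Fin.val_cast_of_lt (by omega), Fin.val_cast_of_lt (by omega)] at this
  omega

open Fin.NatCast in
lemma dotAct_WST {i : ℕ} (hi : i < n) {M : Fin (n + 1) → Fin (n + 1) → Prop}
    (hM : IsMatch M) :
    dotAct k n i (WST M) =
      WST (upd ((i : ℕ) : Fin (n + 1)) (((i + 1 : ℕ)) : Fin (n + 1)) M) := by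
  set I : Fin (n + 1) := ((i : ℕ) : Fin (n + 1)) with hI
  set J : Fin (n + 1) := (((i + 1 : ℕ)) : Fin (n + 1)) with hJ
  have hIJ : I ≠ J := cast_ne hi
  have hsimple : simple n i = Equiv.swap I J := rfl
  rw [dotAct, Vi, hsimple, permSet_WST]
  ext x
  simp only [Set.mem_inter_iff, Set.mem_union]
  rw [mem_Vt_iff hIJ]
  simp only [WST, Set.mem_setOf_eq]
  constructor
  · rintro ⟨h1, h2⟩
    rcases h1 with rfl | ⟨hs, htv, hIJx⟩
    · exact Or.inl rfl
    · right
      refine ⟨hs, htv, ?_⟩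
      rw [← core_iff hIJ hM htv]
      refine ⟨hIJx, ?_⟩
      rcases h2 with (rfl | ⟨_, _, hsp⟩) | (rfl | ⟨_, _, hsp⟩)
      · exact absurd rfl hIJx
      · exact Or.inl hsp
      · exact absurd rfl hIJx
      · exact Or.inr hsp
  · intro h
    rcases h with rfl | ⟨hs, htv, hsp⟩
    · exact ⟨Or.inl rfl, Or.inl (Or.inl rfl)⟩
    · rw [← core_iff hIJ hM htv] at hsp
      obtain ⟨hIJx, hrest⟩ := hsp
      refine ⟨Or.inr ⟨hs, htv, hIJx⟩, ?_⟩
      rcases hrest with h' | h'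
      · exact Or.inl (Or.inr ⟨hs, htv, h'⟩)
      · exact Or.inr (Or.inr ⟨hs, htv, h'⟩)

/-- The single-pair matching. -/
def pairM {n : ℕ} (I J : Fin (n + 1)) : Fin (n + 1) → Fin (n + 1) → Prop :=
  fun a b => (a = I ∧ b = J) ∨ (a = J ∧ b = I)

lemma isMatch_pairM {I J : Fin (n + 1)} (hIJ : I ≠ J) : IsMatch (pairM I J) := by
  refine ⟨?_, ?_, ?_⟩
  · rintro a b (⟨h1, h2⟩ | ⟨h1, h2⟩)
    · exact Or.inr ⟨h2, h1⟩
    · exact Or.inl ⟨h2, h1⟩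
  · rintro a (⟨h1, h2⟩ | ⟨h1, h2⟩)
    · exact hIJ (h1.symm.trans h2)
    · exact hIJ (h2.symm.trans h1)
  · rintro a b c (⟨h1, h2⟩ | ⟨h1, h2⟩) (⟨h1', h2'⟩ | ⟨h1', h2'⟩)
    · exact h2.trans h2'.symm
    · exact absurd (h1.symm.trans h1') hIJ
    · exact absurd (h1'.symm.trans h1) hIJ
    · exact h2.trans h2'.symm

open Fin.NatCast in
lemma Vi_eq_WST {i : ℕ} (hi : i < n) :
    Vi k n i = WST (pairM ((i : ℕ) : Fin (n + 1)) (((i + 1 : ℕ)) : Fin (n + 1))) := by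
  set I : Fin (n + 1) := ((i : ℕ) : Fin (n + 1)) with hI
  set J : Fin (n + 1) := (((i + 1 : ℕ)) : Fin (n + 1)) with hJ
  have hIJ : I ≠ J := cast_ne hi
  have hsimple : simple n i = Equiv.swap I J := rfl
  rw [Vi, hsimple]
  ext x
  rw [mem_Vt_iff hIJ]
  simp only [WST, Set.mem_setOf_eq]
  constructor
  · rintro (rfl | ⟨hs, htv, hx⟩)
    · exact Or.inl rfl
    · refine Or.inr ⟨hs, htv, ?_⟩
      rintro a b (⟨h1, h2⟩ | ⟨h1, h2⟩)
      · rw [h1, h2]; exact hx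
      · rw [h1, h2]; exact hx.symm
  · rintro (rfl | ⟨hs, htv, hx⟩)
    · exact Or.inl rfl
    · exact Or.inr ⟨hs, htv, hx I J (Or.inl ⟨rfl, rfl⟩)⟩

/-- Each set in the family `𝒱_n` is the point set of a nonempty matching. -/
lemma seqSet_WST : ∀ l : List ℕ, l ≠ [] → (∀ i ∈ l, i < n) →
    ∃ M : Fin (n + 1) → Fin (n + 1) → Prop,
      IsMatch M ∧ (∃ a b, M a b) ∧ seqSet k n l = WST M := by
  intro l
  induction l with
  | nil => intro h; exact absurd rfl h
  | cons i l ih =>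
    intro _ hlt
    have hi : i < n := hlt i List.mem_cons_self
    have hIJ := cast_ne hi
    rcases l with _ | ⟨j, l'⟩
    · refine ⟨pairM _ _, isMatch_pairM hIJ, ⟨_, _, Or.inl ⟨rfl, rfl⟩⟩, ?_⟩
      show Vi k n i = _
      exact Vi_eq_WST hi
    · obtain ⟨M, hM, -, hEq⟩ := ih (by simp) (fun m hm => hlt m (List.mem_cons_of_mem i hm))
      refine ⟨upd _ _ M, isMatch_upd hM hIJ, ⟨_, _, Or.inl ⟨rfl, rfl⟩⟩, ?_⟩
      show dotAct k n i (seqSet k n (j :: l')) = _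
      rw [hEq, dotAct_WST hi hM]

/-- The set of transpositions of a matching. -/
def TrSet {n : ℕ} (M : Fin (n + 1) → Fin (n + 1) → Prop) :
    Set (Equiv.Perm (Fin (n + 1))) :=
  {t | ∃ a b, M a b ∧ t = Equiv.swap a b}

lemma block_vec (p : Fin (n + 1) → Prop) [DecidablePred p]
    (h1 : ∃ a, p a) (h2 : ∃ a, ¬p a) :
    ∃ x : Fin (n + 1) → k, (∑ m, x m) = 0 ∧ TwoVal x ∧ x ≠ 0 ∧
      (∀ a b, p a → ¬p b → x a ≠ x b) ∧ (∀ a b, (p a ↔ p b) → x a = x b) := by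
  classical
  set N1 := (Finset.univ.filter p).card with hN1def
  set N2 := (Finset.univ.filter fun m => ¬p m).card with hN2def
  obtain ⟨a1, ha1⟩ := h1
  obtain ⟨a2, ha2⟩ := h2
  have hN1 : 0 < N1 := Finset.card_pos.mpr ⟨a1, by simp [ha1]⟩
  have hN2 : 0 < N2 := Finset.card_pos.mpr ⟨a2, by simp [ha2]⟩
  have hsumne : ((N1 : k) + (N2 : k)) ≠ 0 := by
    have : ((N1 + N2 : ℕ) : k) ≠ 0 := Nat.cast_ne_zero.mpr (by omega)
    push_cast at this
    exact this
  refine ⟨fun m => if p m then (N2 : k) else -(N1 : k), ?_, ?_, ?_, ?_, ?_⟩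
  · rw [sum_dichot p _ (N2 : k) (-(N1 : k)) (fun j hj => by simp [hj])
      (fun j hj => by simp [hj])]
    rw [← hN1def, ← hN2def]
    ring
  · intro i j l
    by_cases hi : p i <;> by_cases hj : p j <;> by_cases hl : p l <;> simp [hi, hj, hl]
  · intro h
    have := congrFun h a1
    simp only [ha1, if_pos, Pi.zero_apply] at this
    exact Nat.cast_ne_zero.mpr hN2.ne' this
  · intro a b ha hb
    show (if p a then (N2 : k) else -(N1 : k)) ≠ (if p b then (N2 : k) else -(N1 : k))
    rw [if_pos ha, if_neg hb]
    intro h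
    exact hsumne (by linear_combination h)
  · intro a b hab
    show (if p a then (N2 : k) else -(N1 : k)) = (if p b then (N2 : k) else -(N1 : k))
    by_cases ha : p a
    · rw [if_pos ha, if_pos (hab.mp ha)]
    · rw [if_neg ha, if_neg (fun h => ha (hab.mpr h))]

lemma match_min {M : Fin (n + 1) → Fin (n + 1) → Prop} (hM : IsMatch M) {a b : Fin (n + 1)}
    (hab : M a b) (hlt : a < b) :
    (∃ e, M a e ∧ a < e) ∧ ¬(∃ e, M b e ∧ b < e) := by
  refine ⟨⟨b, hab, hlt⟩, ?_⟩
  rintro ⟨e, he, hlt'⟩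
  have : e = a := hM.2.2 b e a he (hM.1 a b hab)
  rw [this] at hlt'
  exact absurd hlt' (not_lt.mpr hlt.le)

/-- A nonzero point in `WST M`. -/
lemma exists_splitter {M : Fin (n + 1) → Fin (n + 1) → Prop} (hM : IsMatch M)
    (hne : ∃ a b, M a b) : ∃ x : Fin (n + 1) → k, x ∈ WST M ∧ x ≠ 0 := by
  classical
  set p : Fin (n + 1) → Prop := fun m => ∃ e, M m e ∧ m < e with hpdef
  obtain ⟨a0, b0, hab0⟩ := hne
  have hab0ne : a0 ≠ b0 := fun h => hM.2.1 a0 (h ▸ hab0)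
  have hex : ∃ c d, M c d ∧ c < d := by
    rcases lt_or_gt_of_ne hab0ne with h | h
    · exact ⟨a0, b0, hab0, h⟩
    · exact ⟨b0, a0, hM.1 _ _ hab0, h⟩
  obtain ⟨c, d, hcd, hcltd⟩ := hex
  obtain ⟨x, hsum, htv, hx0, hsplit, heq⟩ := block_vec (k := k) p
    ⟨c, (match_min hM hcd hcltd).1⟩ ⟨d, (match_min hM hcd hcltd).2⟩
  refine ⟨x, Or.inr ⟨hsum, htv, ?_⟩, hx0⟩
  intro a b hab
  have habne : a ≠ b := fun h => hM.2.1 a (h ▸ hab)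
  rcases lt_or_gt_of_ne habne with h | h
  · exact hsplit a b (match_min hM hab h).1 (match_min hM hab h).2
  · exact (hsplit b a (match_min hM (hM.1 _ _ hab) h).1
      (match_min hM (hM.1 _ _ hab) h).2).symm

lemma WST_subset_Vt {M : Fin (n + 1) → Fin (n + 1) → Prop} (hM : IsMatch M)
    {a b : Fin (n + 1)} (hab : M a b) :
    WST (n := n) M ⊆ Vt k n (Equiv.swap a b) := by
  intro x hx
  have habne : a ≠ b := fun h => hM.2.1 a (h ▸ hab)
  rw [mem_Vt_iff habne]
  rcases hx with rfl | ⟨hs, htv, hsp⟩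
  · exact Or.inl rfl
  · exact Or.inr ⟨hs, htv, hsp a b hab⟩

lemma not_WST_subset_Vt {M : Fin (n + 1) → Fin (n + 1) → Prop} (hM : IsMatch M)
    (hne : ∃ a b, M a b) {a b : Fin (n + 1)} (hab : a ≠ b) (hnM : ¬M a b) :
    ¬(WST (n := n) M ⊆ Vt k n (Equiv.swap a b)) := by
  classical
  obtain ⟨hsym, hirr, huniq⟩ := hM
  set p : Fin (n + 1) → Prop :=
    fun m => m = a ∨ m = b ∨ ∃ e, M m e ∧ m < e ∧ e ≠ a ∧ e ≠ b with hpdef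
  -- for any pair of M, exactly one endpoint satisfies p, and some element fails p
  have pair_out : ∀ c e, M c e → c = a ∨ c = b → ¬p e := by
    intro c e hce hcab
    have heI : e ≠ a := by
      intro h
      rcases hcab with rfl | rfl
      · exact hirr c (h ▸ hce)
      · exact hnM (hsym _ _ (h ▸ hce))
    have heJ : e ≠ b := by
      intro h
      rcases hcab with rfl | rfl
      · exact hnM (h ▸ hce)
      · exact hirr c (h ▸ hce)
    rintro (h | h | ⟨e', he', -, he'a, he'b⟩)
    · exact heI h
    · exact heJ h
    · have : e' = c := huniq e e' c he' (hsym _ _ hce)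
      rcases hcab with rfl | rfl
      · exact he'a this
      · exact he'b this
  have pair_no : ∀ c e, M c e → c ≠ a → c ≠ b → e ≠ a → e ≠ b → c < e → (p c ∧ ¬p e) := by
    intro c e hce hca hcb hea heb hlt
    refine ⟨Or.inr (Or.inr ⟨e, hce, hlt, hea, heb⟩), ?_⟩
    rintro (h | h | ⟨e', he', hlt', -, -⟩)
    · exact hea h
    · exact heb h
    · have : e' = c := huniq e e' c he' (hsym _ _ hce)
      rw [this] at hlt'
      exact absurd hlt' (not_lt.mpr hlt.le)
  have pair_cases : ∀ c e, M c e → (p c ∧ ¬p e) ∨ (¬p c ∧ p e) := by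
    intro c e hce
    have hcene : c ≠ e := fun h => hirr c (h ▸ hce)
    rcases eq_or_ne c a with hca | hca
    · exact Or.inl ⟨Or.inl hca, pair_out c e hce (Or.inl hca)⟩
    rcases eq_or_ne c b with hcb | hcb
    · exact Or.inl ⟨Or.inr (Or.inl hcb), pair_out c e hce (Or.inr hcb)⟩
    rcases eq_or_ne e a with hea | hea
    · exact Or.inr ⟨pair_out e c (hsym _ _ hce) (Or.inl hea), Or.inl hea⟩
    rcases eq_or_ne e b with heb | heb
    · exact Or.inr ⟨pair_out e c (hsym _ _ hce) (Or.inr heb), Or.inr (Or.inl heb)⟩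
    rcases lt_or_gt_of_ne hcene with hlt | hlt
    · exact Or.inl (pair_no c e hce hca hcb hea heb hlt)
    · exact Or.inr ⟨(pair_no e c (hsym _ _ hce) hea heb hca hcb hlt).2,
        (pair_no e c (hsym _ _ hce) hea heb hca hcb hlt).1⟩
  obtain ⟨c0, e0, hce0⟩ := hne
  have h2w : ∃ m, ¬p m := by
    rcases pair_cases c0 e0 hce0 with ⟨-, h⟩ | ⟨h, -⟩
    · exact ⟨e0, h⟩
    · exact ⟨c0, h⟩
  obtain ⟨x, hsum, htv, hx0, hsplit, heq⟩ := block_vec (k := k) p ⟨a, Or.inl rfl⟩ h2w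
  have hxW : x ∈ WST M := by
    refine Or.inr ⟨hsum, htv, ?_⟩
    intro c e hce
    rcases pair_cases c e hce with ⟨h1', h2'⟩ | ⟨h1', h2'⟩
    · exact hsplit c e h1' h2'
    · exact (hsplit e c h2' h1').symm
  have hxab : x a = x b := heq a b (iff_of_true (Or.inl rfl) (Or.inr (Or.inl rfl)))
  intro hsub
  have hxV := hsub hxW
  rw [mem_Vt_iff hab] at hxV
  rcases hxV with h | ⟨-, -, hne'⟩
  · exact hx0 h
  · exact hne' hxab

lemma TrSet_eq {M : Fin (n + 1) → Fin (n + 1) → Prop} (hM : IsMatch M)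
    (hne : ∃ a b, M a b) :
    {t | IsTransposition t ∧ WST (n := n) (k := k) M ⊆ Vt k n t} = TrSet M := by
  ext t
  constructor
  · rintro ⟨⟨a, b, hab, rfl⟩, hsub⟩
    by_contra htn
    have hnM : ¬M a b := fun h => htn ⟨a, b, h, rfl⟩
    exact not_WST_subset_Vt hM hne hab hnM hsub
  · rintro ⟨a, b, hab, rfl⟩
    have habne : a ≠ b := fun h => hM.2.1 a (h ▸ hab)
    exact ⟨⟨a, b, habne, rfl⟩, WST_subset_Vt hM hab⟩

lemma comm_TrSet {M : Fin (n + 1) → Fin (n + 1) → Prop} (hM : IsMatch M) :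
    CommTranspositions n (TrSet M) := by
  obtain ⟨hsym, hirr, huniq⟩ := hM
  constructor
  · rintro t ⟨a, b, hab, rfl⟩
    exact ⟨a, b, fun h => hirr a (h ▸ hab), rfl⟩
  · rintro t ⟨a, b, hab, rfl⟩ t' ⟨c, d, hcd, rfl⟩
    rcases eq_or_ne a c with hac | hac
    · have : b = d := huniq c b d (hac ▸ hab) hcd
      rw [hac, this]
    rcases eq_or_ne a d with had | had
    · have hbc : b = c := huniq d b c (had ▸ hab) (hsym _ _ hcd)
      rw [had, hbc, Equiv.swap_comm]
    rcases eq_or_ne b c with hbc | hbc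
    · have : a = d := huniq c a d (hbc ▸ hsym _ _ hab) hcd
      exact absurd this had
    rcases eq_or_ne b d with hbd | hbd
    · have : a = c := huniq d a c (hbd ▸ hsym _ _ hab) (hsym _ _ hcd)
      exact absurd this hac
    · have hdisj : (Equiv.swap a b).Disjoint (Equiv.swap c d) := by
        intro m
        rcases eq_or_ne m a with rfl | hma
        · exact Or.inr (Equiv.swap_apply_of_ne_of_ne hac had)
        rcases eq_or_ne m b with rfl | hmb
        · exact Or.inr (Equiv.swap_apply_of_ne_of_ne hbc hbd)
        · exact Or.inl (Equiv.swap_apply_of_ne_of_ne hma hmb)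
      exact hdisj.commute.eq

lemma WST_eq_iInter {M : Fin (n + 1) → Fin (n + 1) → Prop} (hM : IsMatch M)
    (hne : ∃ a b, M a b) :
    WST (n := n) (k := k) M = ⋂ t ∈ TrSet M, Vt k n t := by
  ext x
  rw [Set.mem_iInter₂]
  constructor
  · intro hx t ht
    obtain ⟨a, b, hab, rfl⟩ := ht
    exact WST_subset_Vt hM hab hx
  · intro h
    rcases eq_or_ne x 0 with rfl | hx0
    · exact Or.inl rfl
    · obtain ⟨a0, b0, hab0⟩ := hne
      have h0 := h (Equiv.swap a0 b0) ⟨a0, b0, hab0, rfl⟩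
      have hne0 : a0 ≠ b0 := fun hh => hM.2.1 a0 (by rw [← hh] at hab0; exact hab0)
      rw [mem_Vt_iff hne0] at h0
      rcases h0 with rfl | ⟨hs, htv, -⟩
      · exact absurd rfl hx0
      · refine Or.inr ⟨hs, htv, ?_⟩
        intro a b hab
        have h1 := h (Equiv.swap a b) ⟨a, b, hab, rfl⟩
        have hne1 : a ≠ b := fun hh => hM.2.1 a (by rw [← hh] at hab; exact hab)
        rw [mem_Vt_iff hne1] at h1
        rcases h1 with rfl | ⟨-, -, hne'⟩
        · exact absurd rfl hx0
        · exact hne'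

lemma unique_Q {M : Fin (n + 1) → Fin (n + 1) → Prop} (hM : IsMatch M)
    (hne : ∃ a b, M a b) (Q : Set (Equiv.Perm (Fin (n + 1))))
    (hQtr : ∀ t ∈ Q, IsTransposition t)
    (hEq : WST (n := n) (k := k) M = ⋂ t ∈ Q, Vt k n t) : Q = TrSet M := by
  classical
  have hQsub : Q ⊆ TrSet M := by
    intro t' ht'
    rw [← TrSet_eq (k := k) hM hne]
    refine ⟨hQtr t' ht', ?_⟩
    rw [hEq]
    exact Set.biInter_subset_of_mem ht'
  refine Set.Subset.antisymm hQsub ?_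
  rintro t ⟨a, b, hab, rfl⟩
  by_contra htQ
  obtain ⟨hsym, hirr, huniq⟩ := hM
  -- Q is nonempty
  have hQne : ∃ t', t' ∈ Q := by
    by_contra hQe
    push_neg at hQe
    have h1 : (fun _ : Fin (n + 1) => (1 : k)) ∈ ⋂ t ∈ Q, Vt k n t :=
      Set.mem_iInter₂.mpr fun t' ht' => absurd ht' (hQe t')
    rw [← hEq] at h1
    rcases h1 with h | ⟨hs, -, -⟩
    · exact one_ne_zero (congrFun h 0)
    · rw [Finset.sum_const, Finset.card_univ, Fintype.card_fin, nsmul_eq_mul, mul_one] at hs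
      exact Nat.cast_ne_zero.mpr (Nat.succ_ne_zero n) hs
  -- the sub-matching of pairs whose transposition lies in Q
  set M0 : Fin (n + 1) → Fin (n + 1) → Prop :=
    fun c d => M c d ∧ Equiv.swap c d ∈ Q with hM0def
  have hM0sym : ∀ c d, M0 c d → M0 d c := by
    rintro c d ⟨h1, h2⟩
    exact ⟨hsym _ _ h1, by rwa [Equiv.swap_comm]⟩
  obtain ⟨t0, ht0⟩ := hQne
  obtain ⟨c0, d0, hc0, rfl⟩ := hQsub ht0
  have hc0ne : c0 ≠ d0 := fun h => hirr c0 (h ▸ hc0)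
  have hM0c0 : M0 c0 d0 := ⟨hc0, ht0⟩
  set p : Fin (n + 1) → Prop := fun m => ∃ e, M0 m e ∧ m < e with hpdef
  have hMM0 : IsMatch M0 := by
    refine ⟨hM0sym, fun c h => hirr c h.1, fun c d e h1 h2 => huniq c d e h1.1 h2.1⟩
  have hp1 : ∃ m, p m := by
    rcases lt_or_gt_of_ne hc0ne with h | h
    · exact ⟨c0, (match_min hMM0 hM0c0 h).1⟩
    · exact ⟨d0, (match_min hMM0 (hM0sym _ _ hM0c0) h).1⟩
  have hp2 : ∃ m, ¬p m := by
    rcases lt_or_gt_of_ne hc0ne with h | h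
    · exact ⟨d0, (match_min hMM0 hM0c0 h).2⟩
    · exact ⟨c0, (match_min hMM0 (hM0sym _ _ hM0c0) h).2⟩
  obtain ⟨x, hsum, htv, hx0, hsplit, heq⟩ := block_vec (k := k) p hp1 hp2
  -- x lies in every Vt for t ∈ Q
  have hxI : x ∈ ⋂ t ∈ Q, Vt k n t := by
    rw [Set.mem_iInter₂]
    intro t' ht'
    obtain ⟨c, d, hcd, rfl⟩ := hQsub ht'
    have hcdne : c ≠ d := fun h => hirr c (h ▸ hcd)
    rw [mem_Vt_iff hcdne]
    have hM0cd : M0 c d := ⟨hcd, ht'⟩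
    refine Or.inr ⟨hsum, htv, ?_⟩
    rcases lt_or_gt_of_ne hcdne with h | h
    · exact hsplit c d (match_min hMM0 hM0cd h).1 (match_min hMM0 hM0cd h).2
    · exact (hsplit d c (match_min hMM0 (hM0sym _ _ hM0cd) h).1
        (match_min hMM0 (hM0sym _ _ hM0cd) h).2).symm
  rw [← hEq] at hxI
  -- but x does not split the pair (a,b)
  have hpa : ¬p a := by
    rintro ⟨e, ⟨he1, he2⟩, -⟩
    have : e = b := huniq a e b he1 hab
    rw [this] at he2
    exact htQ he2
  have hpb : ¬p b := by
    rintro ⟨e, ⟨he1, he2⟩, -⟩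
    have : e = a := huniq b e a he1 (hsym _ _ hab)
    rw [this] at he2
    rw [Equiv.swap_comm] at he2
    exact htQ he2
  have hxab : x a = x b := heq a b (iff_of_false hpa hpb)
  rcases hxI with h | ⟨-, -, hsp⟩
  · exact hx0 h
  · exact hsp a b hab hxab

end AuxLemmas

/-- For every `W ∈ 𝒱_n` one has `W ≠ {0}`, and there is a unique set
`T_W` of pairwise commuting transpositions with `W = ⋂_{t ∈ T_W} V_t`; moreover
`T_W = {t | t a transposition and W ⊆ V_t}`. -/
theorem exists_unique_commuting_set (hn : 1 ≤ n)
    (W : Set (Fin (n + 1) → k)) (hW : memVn k n W) :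
    W ≠ {0} ∧
    (∃! Q : Set (Equiv.Perm (Fin (n + 1))),
      CommTranspositions n Q ∧ W = ⋂ t ∈ Q, Vt k n t) ∧
    (CommTranspositions n {t | IsTransposition t ∧ W ⊆ Vt k n t} ∧
      W = ⋂ t ∈ {t | IsTransposition t ∧ W ⊆ Vt k n t}, Vt k n t) := by
  obtain ⟨l, hl0, hlt, hWl⟩ := hW
  obtain ⟨M, hM, hne, hEq⟩ := seqSet_WST (k := k) (n := n) l hl0 hlt
  have hWM : W = WST M := hWl.trans hEq
  have hTW : {t | IsTransposition t ∧ W ⊆ Vt k n t} = TrSet M := by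
    rw [hWM]
    exact TrSet_eq hM hne
  have hIn : W = ⋂ t ∈ TrSet M, Vt k n t := by
    rw [hWM]
    exact WST_eq_iInter hM hne
  have hComm : CommTranspositions n (TrSet M) := comm_TrSet hM
  refine ⟨?_, ?_, ?_⟩
  · obtain ⟨x, hx, hx0⟩ := exists_splitter (k := k) hM hne
    intro hcon
    rw [hWM] at hcon
    rw [hcon] at hx
    exact hx0 hx
  · refine ⟨TrSet M, ⟨hComm, hIn⟩, ?_⟩
    rintro Q ⟨hQc, hQe⟩
    exact unique_Q hM hne Q hQc.1 (hWM ▸ hQe)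
  · rw [hTW]
    exact ⟨hComm, hIn⟩

end TLpaper
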